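/- For every arbitrage rule ω, the conjugated matrix D_ω = Q^{-1} B_ω Q is block upper-triangular with respect to the decomposition of ℝ^{d(d-1)/2} into the span of {e_{1j} : 2 ≤ j ≤ d} and the span of {e_{ij} : 2 ≤ i < j ≤ d}: that is, for all 2 ≤ i < j ≤ d and 2 ≤ n ≤ d, the (ij, 1n)-entry of D_ω vanishes, and moreover D_ω e_{1n} = e_{1n} for all 2 ≤ n ≤ d. -/

import Mathlib

open Matrix

/-- Index type for the coordinates of `ℝ^{d(d-1)/2}`: pairs `(i,j)` with `i < j`. -/
abbrev Pr (d : ℕ) := {p : Fin d × Fin d // p.1 < p.2}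

/-- The pair `(i,j)` with `i < j` as an element of `Pr d`. -/
def pr {d : ℕ} {i j : Fin d} (h : i < j) : Pr d := ⟨(i, j), h⟩

/-- `Eb p q = e_p e_q^T`, the matrix with a single `1` in position `(p,q)`. -/
noncomputable def Eb {d : ℕ} (p q : Pr d) : Matrix (Pr d) (Pr d) ℝ :=
  Matrix.single p q 1

/-- The matrix `B_ω` for the arbitrage rule `ω = (i,j,k)`, `i < j`, `k ≠ i,j`. -/
noncomputable def Bmat {d : ℕ} (i j k : Fin d) (hij : i < j) (hki : k ≠ i) (hkj : k ≠ j) :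
    Matrix (Pr d) (Pr d) ℝ :=
  if h1 : k < i then
    -- case k < i < j : B = I - e_{ij}(e_{ij}^T + e_{ki}^T - e_{kj}^T)
    1 - Eb (pr hij) (pr hij) - Eb (pr hij) (pr h1) + Eb (pr hij) (pr (h1.trans hij))
  else if h2 : k < j then
    -- case i < k < j : B = I - e_{ij}(e_{ij}^T - e_{ik}^T - e_{kj}^T)
    1 - Eb (pr hij) (pr hij) + Eb (pr hij) (pr (lt_of_le_of_ne (not_lt.1 h1) (Ne.symm hki)))
      + Eb (pr hij) (pr h2)
  else
    -- case i < j < k : B = I - e_{ij}(e_{ij}^T - e_{ik}^T + e_{jk}^T)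
    1 - Eb (pr hij) (pr hij)
      + Eb (pr hij) (pr (hij.trans (lt_of_le_of_ne (not_lt.1 h2) (Ne.symm hkj))))
      - Eb (pr hij) (pr (lt_of_le_of_ne (not_lt.1 h2) (Ne.symm hkj)))

/-- `Q = I + Σ_{2 ≤ i < j ≤ d} e_{ij}(e_{1j}^T - e_{1i}^T)`. -/
noncomputable def Qmat (d : ℕ) [NeZero d] : Matrix (Pr d) (Pr d) ℝ :=
  1 + ∑ p : Pr d,
    if h : (0 : Fin d) < p.1.1 then Eb p (pr (h.trans p.2)) - Eb p (pr h) else 0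

/-- `Q⁻¹ = I - Σ_{2 ≤ i < j ≤ d} e_{ij}(e_{1j}^T - e_{1i}^T)`. -/
noncomputable def Qinv (d : ℕ) [NeZero d] : Matrix (Pr d) (Pr d) ℝ :=
  1 - ∑ p : Pr d,
    if h : (0 : Fin d) < p.1.1 then Eb p (pr (h.trans p.2)) - Eb p (pr h) else 0

/- ### Auxiliary machinery -/

section Aux

variable {d : ℕ} [NeZero d]

lemma Eb_apply (p q r s : Pr d) : Eb p q r s = if p = r ∧ q = s then (1 : ℝ) else 0 := rfl

@[simp] lemma pr_fst {a b : Fin d} (h : a < b) : (pr h).1.1 = a := rfl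
@[simp] lemma pr_snd {a b : Fin d} (h : a < b) : (pr h).1.2 = b := rfl

/-- The nilpotent part of `Q`. -/
noncomputable def Smat (d : ℕ) [NeZero d] : Matrix (Pr d) (Pr d) ℝ :=
  ∑ p : Pr d,
    if h : (0 : Fin d) < p.1.1 then Eb p (pr (h.trans p.2)) - Eb p (pr h) else 0

lemma Qmat_eq (d : ℕ) [NeZero d] : Qmat d = 1 + Smat d := rfl
lemma Qinv_eq (d : ℕ) [NeZero d] : Qinv d = 1 - Smat d := rfl

lemma Smat_apply (r q : Pr d) :
    Smat d r q = if h : (0 : Fin d) < r.1.1 then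
      ((if pr (h.trans r.2) = q then 1 else 0) - (if pr h = q then (1 : ℝ) else 0)) else 0 := by
  unfold Smat
  rw [Matrix.sum_apply]
  rw [Finset.sum_eq_single r (fun p _ hp => ?_) (fun h => absurd (Finset.mem_univ r) h)]
  · by_cases h : (0 : Fin d) < r.1.1
    · rw [dif_pos h, dif_pos h, Matrix.sub_apply, Eb_apply, Eb_apply]
      simp
    · rw [dif_neg h, dif_neg h]
      rfl
  · by_cases hh : (0 : Fin d) < p.1.1
    · rw [dif_pos hh, Matrix.sub_apply, Eb_apply, Eb_apply]
      simp [hp]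
    · rw [dif_neg hh]
      rfl

lemma Smat_col (p r : Pr d) (hr : r.1.1 ≠ 0) : Smat d p r = 0 := by
  rw [Smat_apply]
  rcases Decidable.em ((0 : Fin d) < p.1.1) with h | h
  · have h1 : pr (h.trans p.2) ≠ r := fun e => hr (by rw [← e]; rfl)
    have h2 : pr h ≠ r := fun e => hr (by rw [← e]; rfl)
    rw [dif_pos h, if_neg h1, if_neg h2, sub_zero]
  · rw [dif_neg h]

lemma Smat_row (r q : Pr d) (hr : r.1.1 = 0) : Smat d r q = 0 := by
  rw [Smat_apply, dif_neg]
  rw [hr]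
  exact lt_irrefl 0

lemma Smat_mul_Smat : Smat d * Smat d = 0 := by
  ext p q
  rw [Matrix.mul_apply, Matrix.zero_apply]
  refine Finset.sum_eq_zero fun r _ => ?_
  by_cases hr : r.1.1 = (0 : Fin d)
  · rw [Smat_row r q hr, mul_zero]
  · rw [Smat_col p r hr, zero_mul]

lemma QinvQ : Qinv d * Qmat d = 1 := by
  rw [Qinv_eq, Qmat_eq, sub_mul, one_mul, mul_add, mul_one, Smat_mul_Smat]
  abel

lemma pr_eq_iff {a b : Fin d} (h : a < b) (q : Pr d) :
    pr h = q ↔ a = q.1.1 ∧ b = q.1.2 := by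
  rw [Subtype.ext_iff, Prod.ext_iff]
  exact Iff.rfl

lemma Qmat_col0 (p q : Pr d) (hq : q.1.1 = 0) :
    Qmat d p q = (if p.1.2 = q.1.2 then 1 else 0) - (if p.1.1 = q.1.2 then (1 : ℝ) else 0) := by
  have hq2 : (0 : Fin d) < q.1.2 := hq ▸ q.2
  rw [Qmat_eq, Matrix.add_apply, Matrix.one_apply, Smat_apply]
  rcases Decidable.em ((0 : Fin d) < p.1.1) with h | h
  · have hpq : p ≠ q := fun e => by rw [e, hq] at h; exact lt_irrefl 0 h
    rw [dif_pos h, if_neg hpq, zero_add]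
    simp only [pr_eq_iff]
    simp [hq]
  · have hp0 : p.1.1 = 0 := by
      exact le_antisymm (not_lt.mp h) (Fin.zero_le _)
    have h2 : ¬ p.1.1 = q.1.2 := by
      rw [hp0]; exact fun e => lt_irrefl _ (e ▸ hq2)
    have h3 : p = q ↔ p.1.2 = q.1.2 := by
      constructor
      · intro e; rw [e]
      · intro e; exact Subtype.ext (Prod.ext (hp0.trans hq.symm) e)
    rw [dif_neg h, add_zero, if_congr h3 rfl rfl, if_neg h2, sub_zero]

lemma Eb_mul_apply_same (w a q : Pr d) (M : Matrix (Pr d) (Pr d) ℝ) :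
    (Eb w a * M) w q = M a q := by
  unfold Eb
  rw [Matrix.single_mul_apply_same, one_mul]

lemma Eb_mul_apply_of_ne (w a p q : Pr d) (h : p ≠ w) (M : Matrix (Pr d) (Pr d) ℝ) :
    (Eb w a * M) p q = 0 := by
  unfold Eb
  rw [Matrix.single_mul_apply_of_ne _ _ _ _ _ h]

lemma BQ_col (i j k : Fin d) (hij : i < j) (hki : k ≠ i) (hkj : k ≠ j)
    (p q : Pr d) (hq : q.1.1 = 0) :
    (Bmat i j k hij hki hkj * Qmat d) p q = Qmat d p q := by
  unfold Bmat
  split_ifs with h1 h2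
  · rw [Matrix.add_mul, Matrix.sub_mul, Matrix.sub_mul, Matrix.one_mul,
      Matrix.add_apply, Matrix.sub_apply, Matrix.sub_apply]
    by_cases hp : p = pr hij
    · subst hp
      rw [Eb_mul_apply_same, Eb_mul_apply_same, Eb_mul_apply_same,
        Qmat_col0 _ _ hq, Qmat_col0 _ _ hq, Qmat_col0 _ _ hq]
      simp only [pr_fst, pr_snd]
      by_cases hi : i = q.1.2 <;> by_cases hk : k = q.1.2 <;> by_cases hj : j = q.1.2 <;> simp [hi, hk, hj]
    · rw [Eb_mul_apply_of_ne _ _ _ _ hp, Eb_mul_apply_of_ne _ _ _ _ hp,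
        Eb_mul_apply_of_ne _ _ _ _ hp]
      ring
  · rw [Matrix.add_mul, Matrix.add_mul, Matrix.sub_mul, Matrix.one_mul,
      Matrix.add_apply, Matrix.add_apply, Matrix.sub_apply]
    by_cases hp : p = pr hij
    · subst hp
      rw [Eb_mul_apply_same, Eb_mul_apply_same, Eb_mul_apply_same,
        Qmat_col0 _ _ hq, Qmat_col0 _ _ hq, Qmat_col0 _ _ hq]
      simp only [pr_fst, pr_snd]
      by_cases hi : i = q.1.2 <;> by_cases hk : k = q.1.2 <;> by_cases hj : j = q.1.2 <;> simp [hi, hk, hj]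
    · rw [Eb_mul_apply_of_ne _ _ _ _ hp, Eb_mul_apply_of_ne _ _ _ _ hp,
        Eb_mul_apply_of_ne _ _ _ _ hp]
      ring
  · rw [Matrix.sub_mul, Matrix.add_mul, Matrix.sub_mul, Matrix.one_mul,
      Matrix.sub_apply, Matrix.add_apply, Matrix.sub_apply]
    by_cases hp : p = pr hij
    · subst hp
      rw [Eb_mul_apply_same, Eb_mul_apply_same, Eb_mul_apply_same,
        Qmat_col0 _ _ hq, Qmat_col0 _ _ hq, Qmat_col0 _ _ hq]
      simp only [pr_fst, pr_snd]
      by_cases hi : i = q.1.2 <;> by_cases hk : k = q.1.2 <;> by_cases hj : j = q.1.2 <;> simp [hi, hk, hj]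
    · rw [Eb_mul_apply_of_ne _ _ _ _ hp, Eb_mul_apply_of_ne _ _ _ _ hp,
        Eb_mul_apply_of_ne _ _ _ _ hp]
      ring

lemma conj_col (i j k : Fin d) (hij : i < j) (hki : k ≠ i) (hkj : k ≠ j)
    (p q : Pr d) (hq : q.1.1 = 0) :
    (Qinv d * Bmat i j k hij hki hkj * Qmat d) p q
      = (1 : Matrix (Pr d) (Pr d) ℝ) p q := by
  rw [mul_assoc, Matrix.mul_apply]
  rw [Finset.sum_congr rfl fun r _ => by
    rw [BQ_col i j k hij hki hkj r q hq]]
  rw [← Matrix.mul_apply, QinvQ]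

end Aux

theorem conj_block_triangular (d : ℕ) [NeZero d] (hd : 3 ≤ d)
    (i j k : Fin d) (hij : i < j) (hki : k ≠ i) (hkj : k ≠ j) :
    (∀ p q : Pr d, (0 : Fin d) < p.1.1 → q.1.1 = 0 →
        (Qinv d * Bmat i j k hij hki hkj * Qmat d) p q = 0)
    ∧ ∀ (n : Fin d) (h0n : (0 : Fin d) < n),
        (Qinv d * Bmat i j k hij hki hkj * Qmat d).mulVec (Pi.single (pr h0n) 1)
          = Pi.single (pr h0n) 1 := by
  constructor
  · intro p q hp hq
    rw [conj_col i j k hij hki hkj p q hq]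
    exact Matrix.one_apply_ne fun e => by rw [e, hq] at hp; exact lt_irrefl 0 hp
  · intro n h0n
    funext p
    have : ((Qinv d * Bmat i j k hij hki hkj * Qmat d).mulVec
        (Pi.single (pr h0n) 1)) p
        = (Qinv d * Bmat i j k hij hki hkj * Qmat d) p (pr h0n) := by
      rw [Matrix.mulVec, dotProduct]
      rw [Finset.sum_eq_single (pr h0n) (fun r _ hr => by
        rw [Pi.single_eq_of_ne hr, mul_zero]) (fun h => absurd (Finset.mem_univ _) h)]
      rw [Pi.single_eq_same, mul_one]
    rw [this, conj_col i j k hij hki hkj p (pr h0n) rfl, Matrix.one_apply,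
      Pi.single_apply]
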